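/- Assume the system u_{n+1} = A_n u_n has an exponential dichotomy on ℕ with data (K, α_s, α_u, P^{s,u}). Fix k ∈ ℕ and a subspace V ⊆ ℝ^d, let Q_k^s be the orthogonal projection of V onto range(P_k^s) ∩ V, and let ρ ≥ 0 satisfy ‖P_k^s(I−Q_k^s)v‖ ≤ ρ‖P_k^u(I−Q_k^s)v‖ for all v ∈ V. Define P̃_j := P_j^u + P_j^s Φ(j,k) Q_k^s Φ(k,j) for j ≥ k. Then for all v ∈ V and all j ≥ k: ‖(I − P̃_j)Φ(j,k)v‖ ≤ K² (α_s α_u)^{j−k} ρ ‖P̃_j Φ(j,k)v‖. -/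

import Mathlib

open Filter

noncomputable section

abbrev Euc (d : ℕ) := EuclideanSpace ℝ (Fin d)

/-- Angle between the lines spanned by two vectors. -/
noncomputable def vecAngle {d : ℕ} (v w : Euc d) : ℝ :=
  Real.arccos (|(inner ℝ v w : ℝ)| / (‖v‖ * ‖w‖))

/-- Largest principal angle between two subspaces of equal dimension. -/
noncomputable def subAngle {d : ℕ} (V W : Submodule ℝ (Euc d)) : ℝ :=
  Real.arccos (sInf {c : ℝ | ∃ v ∈ V, ‖v‖ = 1 ∧
    c = sSup {r : ℝ | ∃ w ∈ W, ‖w‖ = 1 ∧ r = (inner ℝ v w : ℝ)}})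

/-- Orthogonal projection onto a subspace, as an endomorphism of the ambient space. -/
noncomputable def projCLM {d : ℕ} (V : Submodule ℝ (Euc d)) : Euc d →L[ℝ] Euc d :=
  V.subtypeL ∘L V.orthogonalProjectionOnto

/-- Forward product `A (m+n-1) ⋯ A m`. -/
noncomputable def PhiF {d : ℕ} (A : ℕ → (Euc d →L[ℝ] Euc d)) (m : ℕ) : ℕ → (Euc d →L[ℝ] Euc d)
  | 0 => 1
  | n + 1 => A (m + n) ∘L PhiF A m n

/-- Solution operator `Φ(n,m) = A_{n-1} ⋯ A_m` for `n ≥ m`,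
`Φ(n,m) = A_n⁻¹ ⋯ A_{m-1}⁻¹` for `n < m`. -/
noncomputable def Phi {d : ℕ} (A : ℕ → (Euc d →L[ℝ] Euc d)) (n m : ℕ) : Euc d →L[ℝ] Euc d :=
  if m ≤ n then PhiF A m (n - m) else Ring.inverse (PhiF A n (m - n))

/-- `a_{m,n}(V) = Σ_{j=m}^n ∠(Φ(j-1,0)V, Φ(j,0)V)`. -/
noncomputable def angSum {d : ℕ} (A : ℕ → (Euc d →L[ℝ] Euc d)) (V : Submodule ℝ (Euc d))
    (m n : ℕ) : ℝ :=
  ∑ j ∈ Finset.Icc m n, subAngle (V.map (Phi A (j - 1) 0 : Euc d →ₗ[ℝ] Euc d)) (V.map (Phi A j 0 : Euc d →ₗ[ℝ] Euc d))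


lemma isUnit_PhiF {d : ℕ} (A : ℕ → (Euc d →L[ℝ] Euc d)) (hA : ∀ n, IsUnit (A n))
    (m n : ℕ) : IsUnit (PhiF A m n) := by
  induction n with
  | zero => exact isUnit_one
  | succ n ih =>
    show IsUnit (A (m + n) ∘L PhiF A m n)
    exact (hA _).mul ih

lemma Phi_inv_comp {d : ℕ} (A : ℕ → (Euc d →L[ℝ] Euc d)) (hA : ∀ n, IsUnit (A n))
    {k j : ℕ} (h : k ≤ j) : Phi A k j ∘L Phi A j k = 1 := by
  rcases eq_or_lt_of_le h with rfl | h
  · have h1 : Phi A k k = 1 := by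
      simp only [Phi, if_pos le_rfl, Nat.sub_self]
      rfl
    rw [h1]
    exact one_mul 1
  · have h1 : ¬ j ≤ k := not_le.mpr h
    simp only [Phi, if_neg h1, if_pos (le_of_lt h)]
    exact Ring.inverse_mul_cancel _ (isUnit_PhiF A hA k (j - k))

/-- Under an exponential dichotomy on `ℕ` with data `(K, αs, αu, P^{s,u})`,
for a subspace `V`, the orthogonal projection `Q` of `V` onto `range(P_k^s) ∩ V`, and `ρ ≥ 0`
with `‖P_k^s(I−Q)v‖ ≤ ρ‖P_k^u(I−Q)v‖` on `V`, the operator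
`P̃_j = P_j^u + P_j^s Φ(j,k) Q Φ(k,j)` satisfies
`‖(I−P̃_j)Φ(j,k)v‖ ≤ K²(αs αu)^{j−k} ρ ‖P̃_j Φ(j,k)v‖` for `v ∈ V`, `j ≥ k`. -/
theorem dichotomy_power_estimate {d : ℕ} (A : ℕ → (Euc d →L[ℝ] Euc d))
    (hA : ∀ n, IsUnit (A n))
    (K αs αu : ℝ) (hK : 0 < K) (hαs : αs ∈ Set.Ioo (0 : ℝ) 1) (hαu : αu ∈ Set.Ioo (0 : ℝ) 1)
    (Ps : ℕ → (Euc d →L[ℝ] Euc d))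
    (hproj : ∀ n, Ps n ∘L Ps n = Ps n)
    (hcomm : ∀ n m, Ps n ∘L Phi A n m = Phi A n m ∘L Ps m)
    (hbs : ∀ n m, m ≤ n → ‖Phi A n m ∘L Ps m‖ ≤ K * αs ^ (n - m))
    (hbu : ∀ n m, m ≤ n → ‖Phi A m n ∘L (1 - Ps n)‖ ≤ K * αu ^ (n - m))
    (k : ℕ) (V : Submodule ℝ (Euc d))
    (Q : Euc d →L[ℝ] Euc d) (hQ : Q = projCLM (LinearMap.range (Ps k : Euc d →ₗ[ℝ] Euc d) ⊓ V))
    (ρ : ℝ) (hρ0 : 0 ≤ ρ)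
    (hρ : ∀ v ∈ V, ‖Ps k (v - Q v)‖ ≤ ρ * ‖(1 - Ps k) (v - Q v)‖) :
    ∀ v ∈ V, ∀ j : ℕ, k ≤ j →
      ‖Phi A j k v - ((1 - Ps j) + Ps j ∘L Phi A j k ∘L Q ∘L Phi A k j) (Phi A j k v)‖ ≤
        K ^ 2 * (αs * αu) ^ (j - k) * ρ *
          ‖((1 - Ps j) + Ps j ∘L Phi A j k ∘L Q ∘L Phi A k j) (Phi A j k v)‖ := by
  intro v hv j hj
  -- pointwise facts
  have hinv : Phi A k j ∘L Phi A j k = 1 := Phi_inv_comp A hA hj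
  have hinv' : ∀ x, Phi A k j (Phi A j k x) = x := by
    intro x
    have := ContinuousLinearMap.ext_iff.mp hinv x
    simpa using this
  have hp : ∀ x, Ps k (Ps k x) = Ps k x := by
    intro x
    have := ContinuousLinearMap.ext_iff.mp (hproj k) x
    simpa using this
  have hcjk : ∀ x, Ps j (Phi A j k x) = Phi A j k (Ps k x) := by
    intro x
    have := ContinuousLinearMap.ext_iff.mp (hcomm j k) x
    simpa using this
  have hckj : ∀ x, Ps k (Phi A k j x) = Phi A k j (Ps j x) := by
    intro x
    have := ContinuousLinearMap.ext_iff.mp (hcomm k j) x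
    simpa using this
  have hPsQ : ∀ x, Ps k (Q x) = Q x := by
    intro x
    have hmem : Q x ∈ LinearMap.range (Ps k : Euc d →ₗ[ℝ] Euc d) ⊓ V := by
      rw [hQ]
      simp only [projCLM, ContinuousLinearMap.comp_apply, Submodule.subtypeL_apply]
      exact Submodule.coe_mem _
    obtain ⟨y, hy⟩ := hmem.1
    rw [← hy]
    exact hp y
  set w := Phi A j k v with hw
  set z := ((1 - Ps j) + Ps j ∘L Phi A j k ∘L Q ∘L Phi A k j) w with hz
  have hzdef : z = (w - Ps j w) + Ps j (Phi A j k (Q v)) := by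
    rw [hz]
    simp [ContinuousLinearMap.add_apply, ContinuousLinearMap.sub_apply,
      ContinuousLinearMap.comp_apply, ContinuousLinearMap.one_apply, hw, hinv' v]
  -- Step A : w - z = Phi A j k (Ps k (v - Q v))
  have hA1 : w - z = Phi A j k (Ps k (v - Q v)) := by
    rw [← hcjk, map_sub, map_sub, ← hw, hzdef]
    abel
  -- Step C : (1 - Ps k) (v - Q v) = (Phi A k j ∘L (1 - Ps j)) z
  have hzkj : Phi A k j z = v - Ps k v + Q v := by
    rw [hzdef, hw, map_add, map_sub, ← hckj, ← hckj, hinv' v, hinv' (Q v), hPsQ]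
  have hC : (1 - Ps k) (v - Q v) = (Phi A k j ∘L (1 - Ps j)) z := by
    have h1 : (Phi A k j ∘L (1 - Ps j)) z = Phi A k j z - Ps k (Phi A k j z) := by
      simp [ContinuousLinearMap.comp_apply, ContinuousLinearMap.sub_apply,
        ContinuousLinearMap.one_apply, map_sub, hckj]
    rw [h1, hzkj]
    simp only [ContinuousLinearMap.sub_apply, ContinuousLinearMap.one_apply,
      map_add, map_sub, hp, hPsQ]
    abel
  -- assemble
  have hnormA : ‖w - z‖ ≤ (K * αs ^ (j - k)) * (ρ * ‖(1 - Ps k) (v - Q v)‖) := by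
    have e1 : w - z = (Phi A j k ∘L Ps k) (Ps k (v - Q v)) := by
      rw [hA1]; simp [ContinuousLinearMap.comp_apply, hp]
    calc ‖w - z‖ = ‖(Phi A j k ∘L Ps k) (Ps k (v - Q v))‖ := by rw [e1]
      _ ≤ ‖Phi A j k ∘L Ps k‖ * ‖Ps k (v - Q v)‖ := ContinuousLinearMap.le_opNorm _ _
      _ ≤ (K * αs ^ (j - k)) * (ρ * ‖(1 - Ps k) (v - Q v)‖) := by
          exact mul_le_mul (hbs j k hj) (hρ v hv) (norm_nonneg _)
            (mul_nonneg hK.le (pow_nonneg hαs.1.le _))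
  have hnormC : ‖(1 - Ps k) (v - Q v)‖ ≤ (K * αu ^ (j - k)) * ‖z‖ := by
    calc ‖(1 - Ps k) (v - Q v)‖ = ‖(Phi A k j ∘L (1 - Ps j)) z‖ := by rw [hC]
      _ ≤ ‖Phi A k j ∘L (1 - Ps j)‖ * ‖z‖ := ContinuousLinearMap.le_opNorm _ _
      _ ≤ (K * αu ^ (j - k)) * ‖z‖ := by
          apply mul_le_mul_of_nonneg_right (hbu j k hj) (norm_nonneg _)
  have hfin : ‖w - z‖ ≤ K ^ 2 * (αs * αu) ^ (j - k) * ρ * ‖z‖ := by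
    calc ‖w - z‖ ≤ (K * αs ^ (j - k)) * (ρ * ‖(1 - Ps k) (v - Q v)‖) := hnormA
      _ ≤ (K * αs ^ (j - k)) * (ρ * ((K * αu ^ (j - k)) * ‖z‖)) := by
          apply mul_le_mul_of_nonneg_left _
            (mul_nonneg hK.le (pow_nonneg hαs.1.le _))
          exact mul_le_mul_of_nonneg_left hnormC hρ0
      _ = K ^ 2 * (αs * αu) ^ (j - k) * ρ * ‖z‖ := by
          rw [mul_pow]; ring
  exact hfin
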